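/- arXiv:1411.2342 — 8 statements merged into one kernel-verified Lean document; each statement's English description precedes it below -/
import Mathlib

section
/- For every state vector w ∈ ℝ^{3n}, every choice of densities ρ₁,…,ρₙ > 0, and every θ ∈ ℝ, the rotation matrix P(θ) satisfies P(θ)⁻¹ = P(θ)ᵀ and the rotational-invariance identity cos(θ)·A_x(w,γ) + sin(θ)·A_y(w,γ) = P(θ)⁻¹ · A_x(P(θ)w, γ) · P(θ). -/
open Matrix

namespace MLSW0

noncomputable def alpha (n : ℕ) (ρ : Fin n → ℝ) (i k : Fin n) : ℝ :=
  if k < i then ρ k / ρ i else 1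

noncomputable def Gam (n : ℕ) (ρ : Fin n → ℝ) : Matrix (Fin n) (Fin n) ℝ :=
  Matrix.of (alpha n ρ)

/-- A 3×3 block matrix with n×n blocks, rows `[[A,B,C],[D,E,F],[G,H,K]]`. -/
def blk3 {n : ℕ} (A B C D E F G H K : Matrix (Fin n) (Fin n) ℝ) :
    Matrix (Fin n ⊕ Fin n ⊕ Fin n) (Fin n ⊕ Fin n ⊕ Fin n) ℝ :=
  Matrix.fromBlocks A (Matrix.fromCols B C) (Matrix.fromRows D G)
    (Matrix.fromBlocks E F H K)

/-- The matrix `A_x(w,γ)` of the multi-layer shallow water model, where the state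
vector `w = (h, u, v)` is indexed by `Fin n ⊕ Fin n ⊕ Fin n`. -/
noncomputable def Ax (n : ℕ) (ρ : Fin n → ℝ) (w : Fin n ⊕ Fin n ⊕ Fin n → ℝ) :
    Matrix (Fin n ⊕ Fin n ⊕ Fin n) (Fin n ⊕ Fin n ⊕ Fin n) ℝ :=
  blk3 (Matrix.diagonal fun i => w (Sum.inr (Sum.inl i)))
    (Matrix.diagonal fun i => w (Sum.inl i)) 0
    (Gam n ρ) (Matrix.diagonal fun i => w (Sum.inr (Sum.inl i))) 0
    0 0 (Matrix.diagonal fun i => w (Sum.inr (Sum.inl i)))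

/-- The matrix `A_y(w,γ)` of the multi-layer shallow water model. -/
noncomputable def Ay (n : ℕ) (ρ : Fin n → ℝ) (w : Fin n ⊕ Fin n ⊕ Fin n → ℝ) :
    Matrix (Fin n ⊕ Fin n ⊕ Fin n) (Fin n ⊕ Fin n ⊕ Fin n) ℝ :=
  blk3 (Matrix.diagonal fun i => w (Sum.inr (Sum.inr i))) 0
    (Matrix.diagonal fun i => w (Sum.inl i))
    0 (Matrix.diagonal fun i => w (Sum.inr (Sum.inr i))) 0
    (Gam n ρ) 0 (Matrix.diagonal fun i => w (Sum.inr (Sum.inr i)))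

/-- The 3n×3n rotation matrix `P(θ)`. -/
noncomputable def Pmat (n : ℕ) (θ : ℝ) :
    Matrix (Fin n ⊕ Fin n ⊕ Fin n) (Fin n ⊕ Fin n ⊕ Fin n) ℝ :=
  blk3 1 0 0
    0 (Real.cos θ • 1) (Real.sin θ • 1)
    0 (-(Real.sin θ) • 1) (Real.cos θ • 1)


lemma blk3_mul {n : ℕ} (A B C D E F G H K A' B' C' D' E' F' G' H' K' : Matrix (Fin n) (Fin n) ℝ) :
    blk3 A B C D E F G H K * blk3 A' B' C' D' E' F' G' H' K' =
    blk3 (A*A'+B*D'+C*G') (A*B'+B*E'+C*H') (A*C'+B*F'+C*K')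
      (D*A'+E*D'+F*G') (D*B'+E*E'+F*H') (D*C'+E*F'+F*K')
      (G*A'+H*D'+K*G') (G*B'+H*E'+K*H') (G*C'+H*F'+K*K') := by
  ext (i|i|i) (j|j|j) <;>
    simp [blk3, mul_apply, Fintype.sum_sum_type, Matrix.fromBlocks, Matrix.fromCols,
      Matrix.fromRows_apply_inl, Matrix.fromRows_apply_inr, Matrix.add_apply, Finset.sum_add_distrib, add_assoc]

lemma blk3_transpose {n : ℕ} (A B C D E F G H K : Matrix (Fin n) (Fin n) ℝ) :
    (blk3 A B C D E F G H K)ᵀ = blk3 Aᵀ Dᵀ Gᵀ Bᵀ Eᵀ Hᵀ Cᵀ Fᵀ Kᵀ := by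
  ext (i|i|i) (j|j|j) <;>
    simp [blk3, Matrix.fromBlocks, Matrix.fromCols, Matrix.fromRows_apply_inl, Matrix.fromRows_apply_inr]

lemma blk3_ext {n : ℕ} {A B C D E F G H K A' B' C' D' E' F' G' H' K' : Matrix (Fin n) (Fin n) ℝ}
    (hA : A = A') (hB : B = B') (hC : C = C') (hD : D = D') (hE : E = E') (hF : F = F')
    (hG : G = G') (hH : H = H') (hK : K = K') :
    blk3 A B C D E F G H K = blk3 A' B' C' D' E' F' G' H' K' := by
  rw [hA, hB, hC, hD, hE, hF, hG, hH, hK]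

lemma mv1 {n : ℕ} (θ : ℝ) (w : Fin n ⊕ Fin n ⊕ Fin n → ℝ) (i : Fin n) :
    (Pmat n θ).mulVec w (Sum.inl i) = w (Sum.inl i) := by
  simp [Pmat, blk3, mulVec, dotProduct, Fintype.sum_sum_type, Matrix.fromBlocks,
    Matrix.fromCols, Matrix.fromRows_apply_inl, Matrix.fromRows_apply_inr, Matrix.one_apply, ite_mul, Finset.sum_ite_eq]

lemma mv2 {n : ℕ} (θ : ℝ) (w : Fin n ⊕ Fin n ⊕ Fin n → ℝ) (i : Fin n) :
    (Pmat n θ).mulVec w (Sum.inr (Sum.inl i)) =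
      Real.cos θ * w (Sum.inr (Sum.inl i)) + Real.sin θ * w (Sum.inr (Sum.inr i)) := by
  simp [Pmat, blk3, mulVec, dotProduct, Fintype.sum_sum_type, Matrix.fromBlocks,
    Matrix.fromCols, Matrix.fromRows_apply_inl, Matrix.fromRows_apply_inr, Matrix.one_apply, ite_mul, mul_ite,
    Finset.sum_ite_eq, Matrix.smul_apply]

/-- Rotational invariance of the multi-layer shallow water model:
`P(θ)⁻¹ = P(θ)ᵀ` and `cos θ • A_x(w,γ) + sin θ • A_y(w,γ) = P(θ)⁻¹ A_x(P(θ)w, γ) P(θ)`. -/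
theorem stmt0 (n : ℕ) (hn : 2 ≤ n) (ρ : Fin n → ℝ) (hρ : ∀ i, 0 < ρ i)
    (w : Fin n ⊕ Fin n ⊕ Fin n → ℝ) (θ : ℝ) :
    (Pmat n θ)⁻¹ = (Pmat n θ)ᵀ ∧
    Real.cos θ • Ax n ρ w + Real.sin θ • Ay n ρ w =
      (Pmat n θ)⁻¹ * Ax n ρ ((Pmat n θ).mulVec w) * Pmat n θ := by
  have htrig : Real.cos θ * Real.cos θ + Real.sin θ * Real.sin θ = 1 := by
    nlinarith [Real.sin_sq_add_cos_sq θ]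
  have hPPt : Pmat n θ * (Pmat n θ)ᵀ = 1 := by
    rw [Pmat, blk3_transpose, blk3_mul]
    ext (i|i|i) (j|j|j) <;>
      simp [blk3, Matrix.fromBlocks, Matrix.fromCols, Matrix.fromRows_apply_inl, Matrix.fromRows_apply_inr, Matrix.one_apply,
        Matrix.smul_apply, Matrix.add_apply] <;>
      · split <;> first | rfl | ring1 | linear_combination htrig
  have hinv : (Pmat n θ)⁻¹ = (Pmat n θ)ᵀ := Matrix.inv_eq_right_inv hPPt
  refine ⟨hinv, ?_⟩
  rw [hinv]
  set C := Real.cos θ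
  set S := Real.sin θ
  have hAxP : Ax n ρ ((Pmat n θ).mulVec w) =
      blk3 (Matrix.diagonal fun i => C * w (Sum.inr (Sum.inl i)) + S * w (Sum.inr (Sum.inr i)))
        (Matrix.diagonal fun i => w (Sum.inl i)) 0
        (Gam n ρ)
        (Matrix.diagonal fun i => C * w (Sum.inr (Sum.inl i)) + S * w (Sum.inr (Sum.inr i))) 0
        0 0
        (Matrix.diagonal fun i => C * w (Sum.inr (Sum.inl i)) + S * w (Sum.inr (Sum.inr i))) := by
    rw [Ax]
    exact blk3_ext (by ext i j; simp [Matrix.diagonal_apply, mv2, C, S])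
      (by ext i j; simp [Matrix.diagonal_apply, mv1])
      rfl rfl (by ext i j; simp [Matrix.diagonal_apply, mv2, C, S]) rfl rfl rfl
      (by ext i j; simp [Matrix.diagonal_apply, mv2, C, S])
  rw [hAxP, Pmat, blk3_transpose, blk3_mul, blk3_mul, Ax, Ay]
  ext (i|i|i) (j|j|j) <;>
    simp [blk3, Matrix.fromBlocks, Matrix.fromCols, Matrix.fromRows_apply_inl, Matrix.fromRows_apply_inr, Matrix.one_apply,
      Matrix.smul_apply, Matrix.add_apply, Matrix.diagonal_apply, Matrix.smul_mul,
      Matrix.mul_smul, Matrix.mul_apply, Fintype.sum_sum_type, ite_mul, mul_ite,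
      Finset.sum_ite_eq, Finset.sum_ite_eq', Gam, C, S] <;>
    · split <;>
        first
          | rfl | ring1
          | linear_combination (-(C * w (Sum.inr (Sum.inl i)) + S * w (Sum.inr (Sum.inr i)))) * htrig


end MLSW0
end

section
/- Let h ∈ ℝⁿ and densities ρ₁,…,ρₙ > 0. The symmetric 3n×3n block-diagonal matrix S⁰_x(h,γ) := diag(ΔΓ, ΔH, ΔH) is positive definite if and only if hᵢ > 0 for all i ∈ {1,…,n} and 0 < γᵢ < 1 for all i ∈ {1,…,n−1}. -/
open Matrix

namespace MLSW2

noncomputable def alpha (n : ℕ) (ρ : Fin n → ℝ) (i k : Fin n) : ℝ :=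
  if k < i then ρ k / ρ i else 1

noncomputable def Gam (n : ℕ) (ρ : Fin n → ℝ) : Matrix (Fin n) (Fin n) ℝ :=
  Matrix.of (alpha n ρ)

noncomputable def alphaN (n : ℕ) (ρ : Fin n → ℝ) (i : Fin n) : ℝ :=
  if h : n - 1 < n then alpha n ρ ⟨n - 1, h⟩ i else 1

noncomputable def Delta (n : ℕ) (ρ : Fin n → ℝ) : Matrix (Fin n) (Fin n) ℝ :=
  Matrix.diagonal (alphaN n ρ)

/-- The density ratio `γᵢ = ρᵢ/ρᵢ₊₁`. -/
noncomputable def gam (n : ℕ) (ρ : Fin n → ℝ) (i : Fin (n - 1)) : ℝ :=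
  ρ ⟨i.val, by have := i.isLt; omega⟩ / ρ ⟨i.val + 1, by have := i.isLt; omega⟩

/-- A 3×3 block matrix with n×n blocks, rows `[[A,B,C],[D,E,F],[G,H,K]]`. -/
def blk3 {n : ℕ} (A B C D E F G H K : Matrix (Fin n) (Fin n) ℝ) :
    Matrix (Fin n ⊕ Fin n ⊕ Fin n) (Fin n ⊕ Fin n ⊕ Fin n) ℝ :=
  Matrix.fromBlocks A (Matrix.fromCols B C) (Matrix.fromRows D G)
    (Matrix.fromBlocks E F H K)

/-- `S⁰_x(h,γ) = diag(ΔΓ, ΔH, ΔH)`. -/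
noncomputable def S0 (n : ℕ) (ρ : Fin n → ℝ) (h : Fin n → ℝ) :
    Matrix (Fin n ⊕ Fin n ⊕ Fin n) (Fin n ⊕ Fin n ⊕ Fin n) ℝ :=
  blk3 (Delta n ρ * Gam n ρ) 0 0
    0 (Delta n ρ * Matrix.diagonal h) 0
    0 0 (Delta n ρ * Matrix.diagonal h)

/-! ### Auxiliary lemmas -/

private lemma tele (f : ℕ → ℝ) : ∀ m : ℕ,
    ∑ k ∈ Finset.range (m + 1), (f k - if k = 0 then 0 else f (k - 1)) = f m
  | 0 => by simp
  | (m + 1) => by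
      rw [Finset.sum_range_succ, tele f m]
      simp

private lemma quad_id (n : ℕ) (f : ℕ → ℝ) (x : Fin n → ℝ) :
    ∑ i : Fin n, ∑ j : Fin n, x i * (f (min i.val j.val) * x j)
      = ∑ k ∈ Finset.range n,
          (f k - if k = 0 then 0 else f (k - 1)) *
            (∑ i : Fin n, if k ≤ i.val then x i else 0) ^ 2 := by
  set D : ℕ → ℝ := fun k => f k - if k = 0 then 0 else f (k - 1) with hDdef
  have key : ∀ i j : Fin n,
      x i * (f (min i.val j.val) * x j)
        = ∑ k ∈ Finset.range n,
            D k * ((if k ≤ i.val then x i else 0) * (if k ≤ j.val then x j else 0)) := by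
    intro i j
    have h1 : ∀ k, D k * ((if k ≤ i.val then x i else 0) * (if k ≤ j.val then x j else 0))
        = if k ≤ min i.val j.val then D k * (x i * x j) else 0 := by
      intro k
      by_cases h1 : k ≤ i.val <;> by_cases h2 : k ≤ j.val <;>
        simp [h1, h2, le_min_iff]
    rw [Finset.sum_congr rfl fun k _ => h1 k, ← Finset.sum_filter]
    have hm : min i.val j.val < n := lt_of_le_of_lt (min_le_left _ _) i.isLt
    have hfil : (Finset.range n).filter (fun k => k ≤ min i.val j.val)
        = Finset.range (min i.val j.val + 1) := by
      ext k
      simp only [Finset.mem_filter, Finset.mem_range, Nat.lt_succ_iff]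
      omega
    rw [hfil, ← Finset.sum_mul, tele f]
    ring
  calc ∑ i : Fin n, ∑ j : Fin n, x i * (f (min i.val j.val) * x j)
      = ∑ i : Fin n, ∑ j : Fin n, ∑ k ∈ Finset.range n,
          D k * ((if k ≤ i.val then x i else 0) * (if k ≤ j.val then x j else 0)) :=
        Finset.sum_congr rfl fun i _ => Finset.sum_congr rfl fun j _ => key i j
    _ = ∑ i : Fin n, ∑ k ∈ Finset.range n, ∑ j : Fin n,
          D k * ((if k ≤ i.val then x i else 0) * (if k ≤ j.val then x j else 0)) :=
        Finset.sum_congr rfl fun i _ => Finset.sum_comm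
    _ = ∑ k ∈ Finset.range n, ∑ i : Fin n, ∑ j : Fin n,
          D k * ((if k ≤ i.val then x i else 0) * (if k ≤ j.val then x j else 0)) :=
        Finset.sum_comm
    _ = ∑ k ∈ Finset.range n,
          D k * (∑ i : Fin n, if k ≤ i.val then x i else 0) ^ 2 := by
        refine Finset.sum_congr rfl fun k _ => ?_
        rw [sq, Finset.sum_mul_sum, Finset.mul_sum]
        exact Finset.sum_congr rfl fun i _ => by rw [Finset.mul_sum]

private lemma minMat_posDef {n : ℕ} (hn : 0 < n) (σ : Fin n → ℝ)
    (h0 : 0 < σ ⟨0, hn⟩) (hmono : ∀ i j : Fin n, i < j → σ i < σ j) :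
    (Matrix.of fun i j : Fin n => σ (min i j)).PosDef := by
  set f : ℕ → ℝ := fun k => if hk : k < n then σ ⟨k, hk⟩ else 0 with hf
  have hσmin : ∀ i j : Fin n, σ (min i j) = f (min i.val j.val) := by
    intro i j
    rcases le_total i j with hij | hij
    · rw [min_eq_left hij, min_eq_left (Fin.le_def.mp hij)]
      simp [f, i.isLt]
    · rw [min_eq_right hij, min_eq_right (Fin.le_def.mp hij)]
      simp [f, j.isLt]
  refine posDef_iff_dotProduct_mulVec.mpr ⟨?_, ?_⟩
  · ext i j
    simp only [Matrix.conjTranspose_apply, Matrix.of_apply, star_trivial]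
    rw [min_comm]
  · intro x hx
    have hform : star x ⬝ᵥ ((Matrix.of fun i j : Fin n => σ (min i j)) *ᵥ x)
        = ∑ i : Fin n, ∑ j : Fin n, x i * (f (min i.val j.val) * x j) := by
      simp only [dotProduct, Matrix.mulVec, Matrix.of_apply, Pi.star_apply, star_trivial,
        Finset.mul_sum]
      exact Finset.sum_congr rfl fun i _ => Finset.sum_congr rfl fun j _ => by rw [hσmin]
    rw [hform, quad_id n f x]
    have hD : ∀ k ∈ Finset.range n, 0 < f k - if k = 0 then 0 else f (k - 1) := by
      intro k hk
      rw [Finset.mem_range] at hk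
      match k with
      | 0 => simpa [f, hn] using h0
      | (m + 1) =>
        have hm : m < n := by omega
        simp only [f, Nat.succ_ne_zero, if_false, Nat.add_sub_cancel, dif_pos hk, dif_pos hm]
        exact sub_pos.mpr (hmono ⟨m, hm⟩ ⟨m + 1, hk⟩ (by simp [Fin.lt_def]))
    have hex : ∃ i : Fin n, x i ≠ 0 := Function.ne_iff.mp hx
    set s : Finset (Fin n) := Finset.univ.filter fun i => x i ≠ 0 with hs
    have hsne : s.Nonempty := by
      obtain ⟨i, hi⟩ := hex
      exact ⟨i, by simp [s, hi]⟩
    set i : Fin n := s.max' hsne with hi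
    have hxi : x i ≠ 0 := by
      have := s.max'_mem hsne
      simpa [s] using this
    have hSi : (∑ j : Fin n, if i.val ≤ j.val then x j else 0) = x i := by
      rw [Finset.sum_eq_single i]
      · simp
      · intro j _ hj
        by_cases hle : i.val ≤ j.val
        · rw [if_pos hle]
          by_contra hxj
          have hjs : j ∈ s := by simp [s, hxj]
          have := Finset.le_max' s j hjs
          exact hj (le_antisymm this (Fin.le_def.mpr hle))
        · rw [if_neg hle]
      · simp
    apply Finset.sum_pos' (fun k hk => mul_nonneg (hD k hk).le (sq_nonneg _))
    refine ⟨i.val, Finset.mem_range.mpr i.isLt, ?_⟩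
    rw [hSi]
    exact mul_pos (hD _ (Finset.mem_range.mpr i.isLt))
      (lt_of_le_of_ne (sq_nonneg _) (Ne.symm (pow_ne_zero 2 hxi)))

private lemma minMat_lt {n : ℕ} (σ : Fin n → ℝ)
    (hM : (Matrix.of fun i j : Fin n => σ (min i j)).PosDef)
    {a b : Fin n} (hab : a < b) : σ a < σ b := by
  have hvne : (Pi.single a 1 - Pi.single b 1 : Fin n → ℝ) ≠ 0 := by
    intro hc
    have := congrFun hc a
    have hne : b ≠ a := hab.ne'
    simp [Pi.single_apply, hne] at this
  have hq := hM.dotProduct_mulVec_pos hvne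
  have hcomp : star (Pi.single a 1 - Pi.single b 1 : Fin n → ℝ) ⬝ᵥ
      ((Matrix.of fun i j : Fin n => σ (min i j)) *ᵥ (Pi.single a 1 - Pi.single b 1))
      = σ b - σ a := by
    rw [star_trivial, Matrix.mulVec_sub, Matrix.mulVec_single_one, Matrix.mulVec_single_one]
    simp only [sub_dotProduct, single_dotProduct, one_mul, Pi.sub_apply, mul_one,
      Matrix.col_apply, Matrix.of_apply]
    rw [min_self, min_self, min_eq_left hab.le, min_eq_right hab.le]
    ring
  rw [hcomp] at hq
  linarith

private lemma DG_eq (n : ℕ) (hn : 2 ≤ n) (ρ : Fin n → ℝ) (hρ : ∀ i, 0 < ρ i) :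
    Delta n ρ * Gam n ρ
      = Matrix.of fun i j : Fin n =>
          (fun k : Fin n => ρ k / ρ ⟨n - 1, by omega⟩) (min i j) := by
  have hlt : n - 1 < n := by omega
  ext i j
  have hL := hρ (⟨n - 1, hlt⟩ : Fin n)
  have hij : ∀ k : Fin n, k ≤ (⟨n - 1, hlt⟩ : Fin n) := by
    intro k
    have := k.isLt
    refine Fin.le_def.mpr ?_
    show k.val ≤ n - 1
    omega
  simp only [Delta, Gam, Matrix.diagonal_mul, Matrix.of_apply, alphaN, dif_pos hlt, alpha]
  by_cases h1 : i < (⟨n - 1, hlt⟩ : Fin n)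
  · by_cases h2 : j < i
    · rw [if_pos h1, if_pos h2, min_eq_right h2.le, div_mul_div_comm,
        mul_comm (ρ i) (ρ j), mul_div_mul_right _ _ (hρ i).ne']
    · rw [if_pos h1, if_neg h2, mul_one, min_eq_left (not_lt.mp h2)]
  · have hiL : i = ⟨n - 1, hlt⟩ := le_antisymm (hij i) (not_lt.mp h1)
    by_cases h2 : j < i
    · rw [if_neg h1, if_pos h2, one_mul, min_eq_right h2.le, hiL]
    · have hjL : j = i := le_antisymm (hiL ▸ hij j) (not_lt.mp h2)
      rw [if_neg h1, if_neg h2, mul_one, hjL, min_self, hiL, div_self hL.ne']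

private lemma posDef_fromBlocks_diag {m l : Type*} [Fintype m] [Fintype l]
    [DecidableEq m] [DecidableEq l] {A : Matrix m m ℝ} {D : Matrix l l ℝ} :
    (Matrix.fromBlocks A 0 0 D).PosDef ↔ A.PosDef ∧ D.PosDef := by
  constructor
  · intro hAD
    refine ⟨posDef_iff_dotProduct_mulVec.mpr ⟨?_, ?_⟩, posDef_iff_dotProduct_mulVec.mpr ⟨?_, ?_⟩⟩
    · ext i j
      have := congrFun (congrFun hAD.1 (Sum.inl i)) (Sum.inl j)
      simpa [Matrix.conjTranspose_apply] using this
    · intro v hv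
      have hx : (Sum.elim v 0 : m ⊕ l → ℝ) ≠ 0 := by
        intro hc
        exact hv (funext fun i => congrFun hc (Sum.inl i))
      have := hAD.dotProduct_mulVec_pos (x := Sum.elim v 0) hx
      simpa [Matrix.fromBlocks_mulVec, Function.star_sumElim,
        sumElim_dotProduct_sumElim] using this
    · ext i j
      have := congrFun (congrFun hAD.1 (Sum.inr i)) (Sum.inr j)
      simpa [Matrix.conjTranspose_apply] using this
    · intro v hv
      have hx : (Sum.elim 0 v : m ⊕ l → ℝ) ≠ 0 := by
        intro hc
        exact hv (funext fun i => congrFun hc (Sum.inr i))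
      have := hAD.dotProduct_mulVec_pos (x := Sum.elim 0 v) hx
      simpa [Matrix.fromBlocks_mulVec, Function.star_sumElim,
        sumElim_dotProduct_sumElim] using this
  · rintro ⟨hA, hD⟩
    refine posDef_iff_dotProduct_mulVec.mpr ⟨?_, ?_⟩
    · rw [Matrix.IsHermitian, Matrix.fromBlocks_conjTranspose, hA.1, hD.1,
        Matrix.conjTranspose_zero, Matrix.conjTranspose_zero]
    · intro x hx
      have hxe : Sum.elim (x ∘ Sum.inl) (x ∘ Sum.inr) = x := Sum.elim_comp_inl_inr x
      rw [← hxe]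
      simp only [Matrix.fromBlocks_mulVec, Function.star_sumElim,
        sumElim_dotProduct_sumElim, Matrix.zero_mulVec, Matrix.mulVec_zero,
        Sum.elim_comp_inl, Sum.elim_comp_inr, add_zero, zero_add]
      by_cases h1 : x ∘ Sum.inl = 0
      · have h2 : x ∘ Sum.inr ≠ 0 := by
          intro hc
          apply hx
          funext sIdx
          cases sIdx with
          | inl i => exact congrFun h1 i
          | inr i => exact congrFun hc i
        have hpos := hD.dotProduct_mulVec_pos h2
        have hnn := hA.posSemidef.dotProduct_mulVec_nonneg (x ∘ Sum.inl)
        linarith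
      · have hpos := hA.dotProduct_mulVec_pos h1
        have hnn := hD.posSemidef.dotProduct_mulVec_nonneg (x ∘ Sum.inr)
        linarith

set_option maxHeartbeats 1000000 in
/-- `S⁰_x(h,γ)` is positive definite iff all heights are positive and `0 < γᵢ < 1`. -/
theorem stmt2 (n : ℕ) (hn : 2 ≤ n) (ρ : Fin n → ℝ) (hρ : ∀ i, 0 < ρ i)
    (h : Fin n → ℝ) :
    (S0 n ρ h).PosDef ↔
      ((∀ i, 0 < h i) ∧ ∀ i : Fin (n - 1), 0 < gam n ρ i ∧ gam n ρ i < 1) := by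
  have h0n : 0 < n := by omega
  have hlt : n - 1 < n := by omega
  have hL := hρ (⟨n - 1, hlt⟩ : Fin n)
  have halphaN : ∀ i, 0 < alphaN n ρ i := by
    intro i
    rw [alphaN, dif_pos hlt, alpha]
    split
    · exact div_pos (hρ _) (hρ _)
    · exact zero_lt_one
  have hDiag : Delta n ρ * Matrix.diagonal h
      = Matrix.diagonal fun i => alphaN n ρ i * h i := by
    rw [Delta, Matrix.diagonal_mul_diagonal]
  have hS0 : S0 n ρ h = Matrix.fromBlocks (Delta n ρ * Gam n ρ) 0 0
      (Matrix.fromBlocks (Delta n ρ * Matrix.diagonal h) 0 0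
        (Delta n ρ * Matrix.diagonal h)) := by
    rw [S0, blk3, Matrix.fromCols_zero, Matrix.fromRows_zero]
  rw [hS0, posDef_fromBlocks_diag, posDef_fromBlocks_diag, hDiag, posDef_diagonal_iff,
    DG_eq n hn ρ hρ]
  constructor
  · rintro ⟨hM, hH, -⟩
    refine ⟨fun i => ?_, fun i => ?_⟩
    · by_contra h'
      exact absurd (hH i)
        (not_lt.mpr (mul_nonpos_of_nonneg_of_nonpos (halphaN i).le (not_lt.mp h')))
    · have hi1 : i.val < n - 1 := i.isLt
      refine ⟨div_pos (hρ _) (hρ _), ?_⟩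
      have hab : (⟨i.val, by omega⟩ : Fin n) < ⟨i.val + 1, by omega⟩ := by
        simp [Fin.lt_def]
      have := minMat_lt (fun k : Fin n => ρ k / ρ ⟨n - 1, by omega⟩) hM hab
      have hab2 : ρ ⟨i.val, by omega⟩ < ρ ⟨i.val + 1, by omega⟩ :=
        (div_lt_div_iff_of_pos_right hL).mp this
      exact (div_lt_one (hρ _)).mpr hab2
  · rintro ⟨hh, hg⟩
    have step : ∀ m : ℕ, ∀ hm1 : m + 1 < n, ρ ⟨m, by omega⟩ < ρ ⟨m + 1, hm1⟩ := by
      intro m hm1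
      have him : m < n - 1 := by omega
      have := (hg ⟨m, him⟩).2
      rw [gam] at this
      exact (div_lt_one (hρ _)).mp this
    have hmono : ∀ i j : Fin n, i < j → ρ i < ρ j := by
      have key : ∀ d a : ℕ, ∀ hd : a + d + 1 < n, ρ ⟨a, by omega⟩ < ρ ⟨a + d + 1, hd⟩ := by
        intro d
        induction d with
        | zero => intro a hd; exact step a hd
        | succ d ih =>
            intro a hd
            refine lt_trans (ih a (by omega)) ?_
            have := step (a + d + 1) (by omega)
            have he : (⟨a + d + 1 + 1, by omega⟩ : Fin n) = ⟨a + (d + 1) + 1, hd⟩ := by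
              simp only [Fin.mk.injEq]
              omega
            rwa [he] at this
      intro i j hij
      have hij' : i.val < j.val := hij
      have hd : i.val + (j.val - i.val - 1) + 1 < n := by have := j.isLt; omega
      have := key (j.val - i.val - 1) i.val hd
      have he1 : (⟨i.val, by omega⟩ : Fin n) = i := Fin.ext rfl
      have he2 : (⟨i.val + (j.val - i.val - 1) + 1, hd⟩ : Fin n) = j := by
        apply Fin.ext
        show i.val + (j.val - i.val - 1) + 1 = j.val
        omega
      rwa [he1, he2] at this
    refine ⟨?_, fun i => mul_pos (halphaN i) (hh i), fun i => mul_pos (halphaN i) (hh i)⟩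
    exact minMat_posDef h0n _ (div_pos (hρ _) hL)
      (fun i j hij => (div_lt_div_iff_of_pos_right hL).mpr (hmono i j hij))

end MLSW2
end

section
/- Let 0 < a₁ < a₂ < … < aₙ be real numbers and set p_k := 1/(a_{k+1} − a_k) for 1 ≤ k ≤ n−1. Then the min-matrix M := (a_{min(i,j)})_{1≤i,j≤n} is invertible and its inverse is the symmetric tridiagonal matrix T with diagonal entries T_{1,1} = (a₂/a₁)p₁, T_{k,k} = p_{k−1} + p_k for 2 ≤ k ≤ n−1, T_{n,n} = p_{n−1}, off-diagonal entries T_{k,k+1} = T_{k+1,k} = −p_k for 1 ≤ k ≤ n−1, and all other entries zero. -/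
open Matrix

namespace MLSW5

/-- `p_k := 1/(a_{k+1} − a_k)` (0-indexed: `p k = 1/(a (k+1) - a k)`). -/
noncomputable def pfun (n : ℕ) (a : Fin n → ℝ) (k : ℕ) : ℝ :=
  if h : k + 1 < n then 1 / (a ⟨k + 1, h⟩ - a ⟨k, by omega⟩) else 0

/-- The min-matrix `M_{i,j} = a_{min(i,j)}`. -/
noncomputable def minMat (n : ℕ) (a : Fin n → ℝ) : Matrix (Fin n) (Fin n) ℝ :=
  Matrix.of fun i j => a (min i j)

/-- The symmetric tridiagonal matrix `T`: diagonal entries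
`T₁₁ = (a₂/a₁)p₁`, `T_{k,k} = p_{k−1} + p_k` (middle), `T_{n,n} = p_{n−1}`,
off-diagonal `T_{k,k+1} = T_{k+1,k} = −p_k`, and all other entries zero. -/
noncomputable def Tmat (n : ℕ) (a : Fin n → ℝ) : Matrix (Fin n) (Fin n) ℝ :=
  Matrix.of fun i j =>
    if i.val = j.val then
      (if i.val = 0 then
        (if h1 : 1 < n then a ⟨1, h1⟩ / a ⟨0, by omega⟩ else 0) * pfun n a 0
      else if i.val = n - 1 then pfun n a (n - 2)
      else pfun n a (i.val - 1) + pfun n a i.val)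
    else if i.val + 1 = j.val then -pfun n a i.val
    else if j.val + 1 = i.val then -pfun n a j.val
    else 0

lemma sum_pick {n : ℕ} (f : Fin n → ℝ) (m : ℕ) :
    (∑ k : Fin n, if k.val = m then f k else 0) = if h : m < n then f ⟨m, h⟩ else 0 := by
  split
  · next h =>
    rw [Finset.sum_eq_single_of_mem ⟨m, h⟩ (Finset.mem_univ _)]
    · simp
    · intro k _ hk
      exact if_neg fun hv => hk (Fin.ext hv)
  · next h =>
    exact Finset.sum_eq_zero fun k _ => if_neg (by omega)

lemma mul_eq_one (n : ℕ) (hn : 2 ≤ n) (a : Fin n → ℝ)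
    (h0 : 0 < a ⟨0, by linarith⟩) (hmono : StrictMono a) :
    minMat n a * Tmat n a = 1 := by
  have hdiff : ∀ (m : ℕ) (h : m + 1 < n), a ⟨m, by omega⟩ < a ⟨m + 1, h⟩ := by
    intro m h
    exact hmono (by simp [Fin.lt_def])
  have hp : ∀ (m : ℕ) (h : m + 1 < n),
      pfun n a m * (a ⟨m + 1, h⟩ - a ⟨m, by omega⟩) = 1 := by
    intro m h
    rw [pfun, dif_pos h, one_div, inv_mul_cancel₀ (sub_ne_zero.2 (hdiff m h).ne')]
  ext i j
  rw [Matrix.mul_apply, Matrix.one_apply]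
  -- diagonal value of T at k
  set D : Fin n → ℝ := fun k =>
      (if k.val = 0 then
        (if h1 : 1 < n then a ⟨1, h1⟩ / a ⟨0, by omega⟩ else 0) * pfun n a 0
      else if k.val = n - 1 then pfun n a (n - 2)
      else pfun n a (k.val - 1) + pfun n a k.val) with hD
  have hsplit : ∀ k : Fin n, minMat n a i k * Tmat n a k j =
      (if k.val = j.val then minMat n a i k * D k else 0)
      + (if k.val + 1 = j.val then minMat n a i k * (-pfun n a k.val) else 0)
      + (if j.val + 1 = k.val then minMat n a i k * (-pfun n a j.val) else 0) := by
    intro k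
    simp only [Tmat, Matrix.of_apply, hD]
    split_ifs <;> first | ring1 | (exfalso; omega)
  rw [Finset.sum_congr rfl fun k _ => hsplit k]
  rw [Finset.sum_add_distrib, Finset.sum_add_distrib]
  rw [sum_pick (fun k => minMat n a i k * D k) j.val]
  have hB : (∑ k : Fin n, if k.val + 1 = j.val then minMat n a i k * (-pfun n a k.val) else 0)
      = if j.val = 0 then 0 else minMat n a i ⟨j.val - 1, by omega⟩ * (-pfun n a (j.val - 1)) := by
    split
    · next h => exact Finset.sum_eq_zero fun k _ => if_neg (by omega)
    · next h =>
      have : ∀ k : Fin n, (if k.val + 1 = j.val then minMat n a i k * (-pfun n a k.val) else 0)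
          = (if k.val = j.val - 1 then minMat n a i k * (-pfun n a k.val) else 0) := by
        intro k
        congr 1
        · simp only [eq_iff_iff]; omega
      rw [Finset.sum_congr rfl fun k _ => this k,
        sum_pick (fun k => minMat n a i k * (-pfun n a k.val)) (j.val - 1),
        dif_pos (show j.val - 1 < n by omega)]
  have hC : (∑ k : Fin n, if j.val + 1 = k.val then minMat n a i k * (-pfun n a j.val) else 0)
      = if h : j.val + 1 < n then minMat n a i ⟨j.val + 1, h⟩ * (-pfun n a j.val) else 0 := by
    have : ∀ k : Fin n, (if j.val + 1 = k.val then minMat n a i k * (-pfun n a j.val) else 0)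
        = (if k.val = j.val + 1 then minMat n a i k * (-pfun n a j.val) else 0) := by
      intro k
      congr 1
      · simp only [eq_iff_iff]; omega
    rw [Finset.sum_congr rfl fun k _ => this k,
      sum_pick (fun k => minMat n a i k * (-pfun n a j.val)) (j.val + 1)]
  rw [hB, hC, dif_pos j.isLt]

  have hpe : ∀ (m : ℕ) (h : m + 1 < n),
      pfun n a m = 1 / (a ⟨m + 1, h⟩ - a ⟨m, by omega⟩) := fun m h => dif_pos h
  have hne : ∀ (m : ℕ) (h : m + 1 < n), a ⟨m + 1, h⟩ - a ⟨m, by omega⟩ ≠ 0 :=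
    fun m h => sub_ne_zero.2 (hdiff m h).ne'
  have hfa : ∀ (m m' : ℕ) (h : m < n) (h' : m' < n), m = m' → a ⟨m, h⟩ = a ⟨m', h'⟩ := by
    intro m m' h h' e
    subst e
    rfl
  have hminL : ∀ (m : ℕ) (h : m < n), i.val ≤ m → minMat n a i ⟨m, h⟩ = a ⟨i.val, i.isLt⟩ := by
    intro m h him
    simp only [minMat, Matrix.of_apply]
    rw [min_eq_left (Fin.le_def.2 him), Fin.eta]
  have hminR : ∀ (m : ℕ) (h : m < n), m ≤ i.val → minMat n a i ⟨m, h⟩ = a ⟨m, h⟩ := by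
    intro m h him
    simp only [minMat, Matrix.of_apply]
    rw [min_eq_right (Fin.le_def.2 him)]
  have hij : (i = j) ↔ (i.val = j.val) := Fin.ext_iff
  by_cases hj0 : j.val = 0
  · have h1n : 1 < n := by omega
    rw [if_pos hj0, dif_pos (show j.val + 1 < n by omega)]
    have hDj : D ⟨j.val, j.isLt⟩ =
        (a ⟨1, h1n⟩ / a ⟨0, by omega⟩) * pfun n a 0 := by
      simp only [hD, if_pos hj0, dif_pos h1n]
    have hpj : pfun n a j.val = pfun n a 0 := by rw [hj0]
    rw [hDj, hminR j.val j.isLt (by omega),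
      hfa j.val 0 j.isLt (by omega) hj0, hpj, hpe 0 (by omega : 0 + 1 < n)]
    have e1 := hne 0 (by omega : 0 + 1 < n)
    by_cases hi0 : i.val = 0
    · rw [if_pos (hij.2 (by omega)), hminL (j.val + 1) (by omega) (by omega),
        hfa i.val 0 i.isLt (by omega) hi0]
      field_simp
      ring
    · rw [if_neg (fun hh : i = j => hi0 (by rw [hij] at hh; omega)),
        hminR (j.val + 1) (by omega) (by omega),
        hfa (j.val + 1) (0 + 1) (by omega) (by omega) (by omega)]
      field_simp
      ring
  · by_cases hjl : j.val = n - 1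
    · rw [if_neg hj0, dif_neg (show ¬ j.val + 1 < n by omega)]
      have hDj : D ⟨j.val, j.isLt⟩ = pfun n a (n - 2) := by
        simp only [hD, if_neg hj0, if_pos hjl]
      have hstep : (n - 2) + 1 < n := by omega
      have hpj : pfun n a (j.val - 1) = pfun n a (n - 2) := by
        rw [show j.val - 1 = n - 2 from by omega]
      rw [hDj, hpj, hpe (n - 2) hstep]
      have e1 := hne (n - 2) hstep
      by_cases hil : i.val = n - 1
      · rw [if_pos (hij.2 (by omega)),
          hminR j.val j.isLt (by omega), hminR (j.val - 1) (by omega) (by omega),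
          hfa j.val ((n - 2) + 1) j.isLt hstep (by omega),
          hfa (j.val - 1) (n - 2) (by omega) (by omega) (by omega)]
        field_simp
        ring
      · rw [if_neg (fun hh : i = j => hil (by rw [hij] at hh; omega)),
          hminL j.val j.isLt (by omega), hminL (j.val - 1) (by omega) (by omega)]
        ring
    · -- middle case : 0 < j.val < n - 1
      rw [if_neg hj0, dif_pos (show j.val + 1 < n by omega)]
      have hDj : D ⟨j.val, j.isLt⟩ = pfun n a (j.val - 1) + pfun n a j.val := by
        simp only [hD, if_neg hj0, if_neg hjl]
      have hs1 : (j.val - 1) + 1 < n := by omega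
      have hs2 : j.val + 1 < n := by omega
      rw [hDj, hpe (j.val - 1) hs1, hpe j.val hs2]
      have e1 := hne (j.val - 1) hs1
      have e2 := hne j.val hs2
      have hja : a ⟨(j.val - 1) + 1, hs1⟩ = a ⟨j.val, j.isLt⟩ :=
        hfa _ _ hs1 j.isLt (by omega)
      rw [hja] at e1 ⊢
      rcases lt_trichotomy i.val j.val with hlt | heq | hgt
      · rw [if_neg (fun hh : i = j => by rw [hij] at hh; omega),
          hminL j.val j.isLt (by omega), hminL (j.val - 1) (by omega) (by omega),
          hminL (j.val + 1) (by omega) (by omega)]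
        ring
      · rw [if_pos (hij.2 heq),
          hminR j.val j.isLt (by omega), hminR (j.val - 1) (by omega) (by omega),
          hminL (j.val + 1) (by omega) (by omega),
          hfa i.val j.val i.isLt j.isLt heq]
        field_simp
        ring
      · rw [if_neg (fun hh : i = j => by rw [hij] at hh; omega),
          hminR j.val j.isLt (by omega), hminR (j.val - 1) (by omega) (by omega),
          hminR (j.val + 1) (by omega) (by omega)]
        field_simp
        ring


/-- The inverse of the min-matrix of a positive strictly increasing sequence is the
explicit symmetric tridiagonal matrix `T`. -/
theorem stmt5 (n : ℕ) (hn : 2 ≤ n) (a : Fin n → ℝ)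
    (h0 : 0 < a ⟨0, by omega⟩) (hmono : StrictMono a) :
    IsUnit (minMat n a) ∧ (minMat n a)⁻¹ = Tmat n a := by
  have h := mul_eq_one n hn a h0 hmono
  exact ⟨@isUnit_of_invertible _ _ _ (invertibleOfRightInverse _ _ h),
    Matrix.inv_eq_right_inv h⟩

end MLSW5
end

section
/- For every state vector w ∈ ℝ^{3n}, every choice of densities ρ₁,…,ρₙ > 0 and every λ ∈ ℝ (or ℂ), the characteristic polynomial of A_x(w,γ) factors as det(A_x(w,γ) − λ·I_{3n}) = det((V_x − λIₙ)² − ΓH) · ∏_{i=1}^n (uᵢ − λ). -/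
open Matrix

namespace MLSW8

noncomputable def alpha (n : ℕ) (ρ : Fin n → ℝ) (i k : Fin n) : ℝ :=
  if k < i then ρ k / ρ i else 1

noncomputable def Gam (n : ℕ) (ρ : Fin n → ℝ) : Matrix (Fin n) (Fin n) ℝ :=
  Matrix.of (alpha n ρ)

/-- A 3×3 block matrix with n×n blocks, rows `[[A,B,C],[D,E,F],[G,H,K]]`. -/
def blk3 {n : ℕ} (A B C D E F G H K : Matrix (Fin n) (Fin n) ℝ) :
    Matrix (Fin n ⊕ Fin n ⊕ Fin n) (Fin n ⊕ Fin n ⊕ Fin n) ℝ :=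
  Matrix.fromBlocks A (Matrix.fromCols B C) (Matrix.fromRows D G)
    (Matrix.fromBlocks E F H K)

/-- The matrix `A_x(w,γ)` of the multi-layer shallow water model. -/
noncomputable def Ax (n : ℕ) (ρ : Fin n → ℝ) (h u : Fin n → ℝ) :
    Matrix (Fin n ⊕ Fin n ⊕ Fin n) (Fin n ⊕ Fin n ⊕ Fin n) ℝ :=
  blk3 (Matrix.diagonal u) (Matrix.diagonal h) 0
    (Gam n ρ) (Matrix.diagonal u) 0
    0 0 (Matrix.diagonal u)

lemma diag_sub_smul_one {n : ℕ} (u : Fin n → ℝ) (lam : ℝ) :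
    Matrix.diagonal u - lam • (1 : Matrix (Fin n) (Fin n) ℝ) =
      Matrix.diagonal (fun i => u i - lam) := by
  ext i j
  by_cases hij : i = j <;>
    simp [Matrix.sub_apply, Matrix.smul_apply, Matrix.one_apply, Matrix.diagonal_apply, hij]

lemma sub_smul_eq {n : ℕ} (ρ h u : Fin n → ℝ) (lam : ℝ) :
    ((Ax n ρ h u - lam • 1).submatrix (Equiv.sumAssoc (Fin n) (Fin n) (Fin n))
        (Equiv.sumAssoc (Fin n) (Fin n) (Fin n))) =
      Matrix.fromBlocks
        (Matrix.fromBlocks (Matrix.diagonal (fun i => u i - lam)) (Matrix.diagonal h)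
          (Gam n ρ) (Matrix.diagonal (fun i => u i - lam)))
        0 0 (Matrix.diagonal (fun i => u i - lam)) := by
  ext i j
  rcases i with (i | i) | i <;> rcases j with (j | j) | j <;>
    simp [Ax, blk3, Matrix.fromCols, Matrix.sub_apply,
      Matrix.smul_apply, Matrix.one_apply, Matrix.diagonal_apply, Equiv.sumAssoc] <;>
    by_cases hij : i = j <;> simp [hij]

lemma det_step {n : ℕ} (ρ h u : Fin n → ℝ) (lam : ℝ) :
    (Ax n ρ h u - lam • 1).det =
      (Matrix.fromBlocks (Matrix.diagonal (fun i => u i - lam)) (Matrix.diagonal h)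
        (Gam n ρ) (Matrix.diagonal (fun i => u i - lam))).det * ∏ i, (u i - lam) := by
  rw [← Matrix.det_submatrix_equiv_self (Equiv.sumAssoc (Fin n) (Fin n) (Fin n)),
    sub_smul_eq, Matrix.det_fromBlocks_zero₂₁, Matrix.det_diagonal]

lemma det_two_block {n : ℕ} (ρ h u : Fin n → ℝ) (lam : ℝ) (hlam : ∀ i, u i - lam ≠ 0) :
    (Matrix.fromBlocks (Matrix.diagonal (fun i => u i - lam)) (Matrix.diagonal h)
        (Gam n ρ) (Matrix.diagonal (fun i => u i - lam))).det =
      ((Matrix.diagonal (fun i => u i - lam)) ^ 2 - Gam n ρ * Matrix.diagonal h).det := by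
  set A := Matrix.diagonal (fun i => u i - lam) with hA
  have hdet : IsUnit A.det := by
    rw [hA, Matrix.det_diagonal]
    exact (Finset.prod_ne_zero_iff.mpr fun i _ => hlam i).isUnit
  have : Invertible A := A.invertibleOfIsUnitDet hdet
  rw [Matrix.det_fromBlocks₁₁]
  have hcomm : Matrix.diagonal h * A = A * Matrix.diagonal h := by
    simp [hA, Matrix.diagonal_mul_diagonal, mul_comm]
  have hkey : (A - Gam n ρ * ⅟A * Matrix.diagonal h) * A
      = A ^ 2 - Gam n ρ * Matrix.diagonal h := by
    rw [Matrix.sub_mul, sq, Matrix.mul_assoc (Gam n ρ * ⅟A), hcomm, ← Matrix.mul_assoc,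
      Matrix.mul_assoc (Gam n ρ), invOf_mul_self, Matrix.mul_one]
  calc A.det * (A - Gam n ρ * ⅟A * Matrix.diagonal h).det
      = ((A - Gam n ρ * ⅟A * Matrix.diagonal h) * A).det := by
        rw [Matrix.det_mul, mul_comm]
    _ = _ := by rw [hkey]

/-- Factorization of the characteristic polynomial of `A_x(w,γ)`:
`det(A_x − λI) = det((V_x − λI)² − ΓH) · ∏ᵢ (uᵢ − λ)`. -/
theorem stmt8 (n : ℕ) (hn : 2 ≤ n) (ρ : Fin n → ℝ) (hρ : ∀ i, 0 < ρ i)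
    (h u v : Fin n → ℝ) (lam : ℝ) :
    (Ax n ρ h u - lam • 1).det =
      ((Matrix.diagonal u - lam • 1) ^ 2 - Gam n ρ * Matrix.diagonal h).det *
        ∏ i, (u i - lam) := by
  have hS : Dense {x : ℝ | ∀ i, u i ≠ x} := by
    have hset : {x : ℝ | ∀ i, u i ≠ x} = (Set.range u)ᶜ := by
      ext x; simp [Set.range, eq_comm]
    rw [hset]
    exact ((Set.finite_range u).countable).dense_compl ℝ
  have hF : Continuous fun x : ℝ => (Ax n ρ h u - x • 1).det :=
    (continuous_const.sub (continuous_id.smul continuous_const)).matrix_det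
  have hG : Continuous fun x : ℝ =>
      ((Matrix.diagonal u - x • 1) ^ 2 - Gam n ρ * Matrix.diagonal h).det *
        ∏ i, (u i - x) := by
    refine Continuous.mul ?_ ?_
    · exact (((continuous_const.sub (continuous_id.smul continuous_const)).pow 2).sub
        continuous_const).matrix_det
    · exact continuous_finset_prod Finset.univ fun i _ =>
        continuous_const.sub continuous_id
  have heq : ∀ x ∈ {x : ℝ | ∀ i, u i ≠ x},
      (Ax n ρ h u - x • 1).det =
        ((Matrix.diagonal u - x • 1) ^ 2 - Gam n ρ * Matrix.diagonal h).det *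
          ∏ i, (u i - x) := by
    intro x hx
    rw [det_step, det_two_block ρ h u x (fun i => sub_ne_zero.mpr (hx i)),
      diag_sub_smul_one]
  exact congrFun (Continuous.ext_on hS hF hG heq) lam

end MLSW8
end

section
/- Let h₁,…,hₙ > 0, H := Σ_{i=1}^n hᵢ, and define f_n(λ,u,γ) := det((diag(u)−λIₙ)² − Γ(γ)·diag(h)) as a smooth function of (λ,u,γ) ∈ ℝ × ℝⁿ × ℝ^{n−1}. Then at the point (λ,u,γ) = (ε√H, 0, (1,…,1)) with ε ∈ {+1,−1}: (i) for every j ∈ {1,…,n}, ∂f_n/∂u_j = −2ε√H · H^{n−2} · h_j; and (ii) for every j ∈ {1,…,n−1}, ∂f_n/∂γ_j = −H^{n−2} · (Σ_{k=1}^{j} h_k) · (Σ_{k=j+1}^{n} h_k). -/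
open Matrix

namespace MLSW13

/-- The matrix `Γ(γ)` with `Γ(γ)_{l,k} = ∏_{j=k}^{l−1} γ_j` for `k < l` and `1` otherwise. -/
noncomputable def GamMat (n : ℕ) (γ : Fin (n - 1) → ℝ) : Matrix (Fin n) (Fin n) ℝ :=
  Matrix.of fun l k =>
    if k < l then
      ∏ j ∈ (Finset.Ico k.val l.val).attach,
        γ ⟨j.1, by
          have hj := Finset.mem_Ico.mp j.2
          have hl := l.isLt
          omega⟩
    else 1

/-- `f_n(λ,u,γ) := det((diag(u) − λI)² − Γ(γ)·diag(h))`. -/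
noncomputable def fn (n : ℕ) (h : Fin n → ℝ) (lam : ℝ) (u : Fin n → ℝ)
    (γ : Fin (n - 1) → ℝ) : ℝ :=
  ((Matrix.diagonal u - lam • 1) ^ 2 - GamMat n γ * Matrix.diagonal h).det

lemma det_aux {n : ℕ} (H : ℝ) (hH : H ≠ 0)
    (U : Matrix (Fin n) (Fin 2) ℝ) (V : Matrix (Fin 2) (Fin n) ℝ) :
    (H • (1 : Matrix (Fin n) (Fin n) ℝ) - U * V).det
      = H ^ n * H⁻¹ ^ 2 * (H • (1 : Matrix (Fin 2) (Fin 2) ℝ) - V * U).det := by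
  have key : H • (1 : Matrix (Fin n) (Fin n) ℝ) - U * V
      = H • ((1 : Matrix (Fin n) (Fin n) ℝ) - U * (H⁻¹ • V)) := by
    rw [smul_sub, Matrix.mul_smul, smul_smul, mul_inv_cancel₀ hH, one_smul]
  rw [key, Matrix.det_smul, Fintype.card_fin, Matrix.det_one_sub_mul_comm]
  have key2 : (1 : Matrix (Fin 2) (Fin 2) ℝ) - (H⁻¹ • V) * U
      = H⁻¹ • (H • (1 : Matrix (Fin 2) (Fin 2) ℝ) - V * U) := by
    rw [smul_sub, smul_smul, inv_mul_cancel₀ hH, one_smul, Matrix.smul_mul]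
  rw [key2, Matrix.det_smul, Fintype.card_fin]
  ring

lemma gam_one (n : ℕ) (l k : Fin n) : GamMat n (fun _ => 1) l k = 1 := by
  simp [GamMat]

lemma gam_update (n : ℕ) (j : Fin (n - 1)) (t : ℝ) (l k : Fin n) :
    GamMat n (Function.update (fun _ => (1 : ℝ)) j t) l k
      = if (k : ℕ) ≤ (j : ℕ) ∧ (j : ℕ) < (l : ℕ) then t else 1 := by
  by_cases hkl : k < l
  · have h1 : GamMat n (Function.update (fun _ => (1 : ℝ)) j t) l k
        = ∏ m ∈ Finset.Ico k.val l.val, (if m = (j : ℕ) then t else 1) := by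
      rw [GamMat, Matrix.of_apply, if_pos hkl, ← Finset.prod_attach (Finset.Ico k.val l.val)
        (fun m => if m = (j : ℕ) then t else 1)]
      refine Finset.prod_congr rfl fun x _ => ?_
      simp [Function.update_apply, Fin.ext_iff]
    rw [h1, Finset.prod_ite_eq' (Finset.Ico k.val l.val) (j : ℕ) (fun _ => t)]
    congr 1
    simp [Finset.mem_Ico]
  · rw [GamMat, Matrix.of_apply, if_neg hkl, eq_comm, if_neg]
    rw [Fin.lt_def, not_lt] at hkl
    omega

/-- Partial derivatives of `f_n` at `(λ,u,γ) = (ε√H, 0, (1,…,1))`: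
`∂f_n/∂u_j = −2ε√H·H^{n−2}·h_j` and
`∂f_n/∂γ_j = −H^{n−2}·(Σ_{k≤j} h_k)·(Σ_{k>j} h_k)`. -/
theorem stmt13 (n : ℕ) (hn : 2 ≤ n) (h : Fin n → ℝ) (hh : ∀ i, 0 < h i)
    (ε : ℝ) (hε : ε = 1 ∨ ε = -1) :
    (∀ j : Fin n,
      HasDerivAt
        (fun t : ℝ =>
          fn n h (ε * Real.sqrt (∑ i, h i))
            (Function.update (fun _ : Fin n => (0 : ℝ)) j t) (fun _ => 1))
        (-2 * (ε * Real.sqrt (∑ i, h i)) * (∑ i, h i) ^ (n - 2) * h j) 0) ∧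
    (∀ j : Fin (n - 1),
      HasDerivAt
        (fun t : ℝ =>
          fn n h (ε * Real.sqrt (∑ i, h i)) (fun _ => 0)
            (Function.update (fun _ : Fin (n - 1) => (1 : ℝ)) j t))
        (-((∑ i, h i) ^ (n - 2) *
            (∑ k ∈ Finset.univ.filter fun k : Fin n => k.val ≤ j.val, h k) *
            (∑ k ∈ Finset.univ.filter fun k : Fin n => j.val < k.val, h k))) 1) := by
  have hnpos : 0 < n := by omega
  set H : ℝ := ∑ i, h i with hHdef
  have HPos : 0 < H := Finset.sum_pos (fun i _ => hh i) ⟨⟨0, hnpos⟩, Finset.mem_univ _⟩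
  have hH0 : H ≠ 0 := ne_of_gt HPos
  set lam : ℝ := ε * Real.sqrt H with hlamdef
  have hlam2 : lam ^ 2 = H := by
    have hs : (Real.sqrt H) ^ 2 = H := Real.sq_sqrt HPos.le
    rcases hε with rfl | rfl <;> simp [hlamdef, mul_pow, hs]
  have hpow : H ^ n * H⁻¹ ^ 2 = H ^ (n - 2) := by
    have h1 : H ^ n = H ^ (n - 2) * H ^ 2 := by
      rw [← pow_add]; congr 1; omega
    rw [h1]
    field_simp
  clear_value lam H
  constructor
  · -- derivatives in u_j
    intro j
    have key : ∀ t : ℝ, fn n h lam (Function.update (fun _ : Fin n => (0 : ℝ)) j t)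
        (fun _ => 1) = H ^ (n - 2) * h j * (t ^ 2 - 2 * lam * t) := by
      intro t
      set s : ℝ := t ^ 2 - 2 * lam * t with hs
      have hM : (Matrix.diagonal (Function.update (fun _ : Fin n => (0 : ℝ)) j t) - lam • 1) ^ 2
          - GamMat n (fun _ => 1) * Matrix.diagonal h
          = H • 1 - (Matrix.of fun (l : Fin n) (i : Fin 2) =>
              if i = 0 then (1 : ℝ) else if l = j then -s else 0)
            * (Matrix.of fun (i : Fin 2) (k : Fin n) =>
              if i = 0 then h k else if k = j then (1 : ℝ) else 0) := by
        have step1 : (Matrix.diagonal (Function.update (fun _ : Fin n => (0 : ℝ)) j t)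
            - lam • 1) ^ 2
            = Matrix.diagonal
                (fun i => (Function.update (fun _ : Fin n => (0 : ℝ)) j t i - lam) ^ 2) := by
          rw [Matrix.smul_one_eq_diagonal, Matrix.diagonal_sub, Matrix.diagonal_pow]; rfl
        ext l k
        rw [Matrix.sub_apply, step1, Matrix.mul_diagonal, gam_one, one_mul,
          Matrix.sub_apply, Matrix.smul_apply, Matrix.one_apply, Matrix.mul_apply,
          Fin.sum_univ_two]
        simp only [Matrix.of_apply, Matrix.diagonal_apply, Function.update_apply,
          smul_eq_mul]
        norm_num
        split_ifs <;> first | ring1 | linear_combination hlam2 | simp_all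
      have hVU : (Matrix.of fun (i : Fin 2) (k : Fin n) =>
              if i = 0 then h k else if k = j then (1 : ℝ) else 0)
            * (Matrix.of fun (l : Fin n) (i : Fin 2) =>
              if i = 0 then (1 : ℝ) else if l = j then -s else 0)
          = !![H, h j * -s; 1, -s] := by
        ext i k
        fin_cases i <;> fin_cases k <;>
          simp [Matrix.mul_apply, mul_ite, ite_mul, mul_zero, zero_mul,
            Finset.sum_ite_eq', hHdef]
      have h2 : H • (1 : Matrix (Fin 2) (Fin 2) ℝ) - !![H, h j * -s; 1, -s]
          = !![0, -(h j * -s); -1, H + s] := by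
        ext i k
        fin_cases i <;> fin_cases k <;> simp [Matrix.one_apply] <;> ring
      rw [fn, hM, det_aux H hH0, hVU, h2, Matrix.det_fin_two_of, hpow]
      ring
    have heq : (fun t : ℝ => fn n h lam (Function.update (fun _ : Fin n => (0 : ℝ)) j t)
        (fun _ => 1)) = fun t : ℝ => H ^ (n - 2) * h j * (t ^ 2 - 2 * lam * t) :=
      funext key
    rw [heq]
    have h1 : HasDerivAt (fun t : ℝ => t ^ 2 - 2 * lam * t) (2 * 0 - 2 * lam) 0 := by
      simpa using ((hasDerivAt_pow 2 (0 : ℝ)).fun_sub ((hasDerivAt_id (0 : ℝ)).const_mul (2 * lam)))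
    have h2 := h1.const_mul (H ^ (n - 2) * h j)
    exact h2.congr_deriv (by ring)
  · -- derivatives in γ_j
    intro j
    set A : ℝ := ∑ k ∈ Finset.univ.filter fun k : Fin n => k.val ≤ j.val, h k with hAdef
    set B : ℝ := ∑ k ∈ Finset.univ.filter fun k : Fin n => j.val < k.val, h k with hBdef
    have key : ∀ t : ℝ, fn n h lam (fun _ => 0)
        (Function.update (fun _ : Fin (n - 1) => (1 : ℝ)) j t)
        = H ^ (n - 2) * (A * B) * (1 - t) := by
      intro t
      have hM : (Matrix.diagonal (fun _ : Fin n => (0 : ℝ)) - lam • 1) ^ 2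
          - GamMat n (Function.update (fun _ : Fin (n - 1) => (1 : ℝ)) j t)
            * Matrix.diagonal h
          = H • 1 - (Matrix.of fun (l : Fin n) (i : Fin 2) =>
              if i = 0 then (1 : ℝ) else if (j : ℕ) < (l : ℕ) then t - 1 else 0)
            * (Matrix.of fun (i : Fin 2) (k : Fin n) =>
              if i = 0 then h k else if (k : ℕ) ≤ (j : ℕ) then h k else 0) := by
        have step1 : (Matrix.diagonal (fun _ : Fin n => (0 : ℝ)) - lam • 1) ^ 2
            = Matrix.diagonal (fun _ : Fin n => ((0 : ℝ) - lam) ^ 2) := by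
          rw [Matrix.smul_one_eq_diagonal, Matrix.diagonal_sub, Matrix.diagonal_pow]; rfl
        ext l k
        rw [Matrix.sub_apply, step1, Matrix.mul_diagonal, gam_update,
          Matrix.sub_apply, Matrix.smul_apply, Matrix.one_apply, Matrix.mul_apply,
          Fin.sum_univ_two]
        simp only [Matrix.of_apply, Matrix.diagonal_apply, smul_eq_mul]
        norm_num
        split_ifs <;> first | ring1 | linear_combination hlam2 | (exfalso; omega) | simp_all
      have hVU : (Matrix.of fun (i : Fin 2) (k : Fin n) =>
              if i = 0 then h k else if (k : ℕ) ≤ (j : ℕ) then h k else 0)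
            * (Matrix.of fun (l : Fin n) (i : Fin 2) =>
              if i = 0 then (1 : ℝ) else if (j : ℕ) < (l : ℕ) then t - 1 else 0)
          = !![H, B * (t - 1); A, 0] := by
        ext i k
        fin_cases i <;> fin_cases k <;>
          simp only [Matrix.mul_apply, Matrix.of_apply, Fin.isValue, Fin.zero_eta, Fin.mk_one,
            Matrix.cons_val', Matrix.cons_val_zero, Matrix.cons_val_one, Matrix.head_cons,
            Matrix.empty_val', Matrix.cons_val_fin_one, Matrix.head_fin_const,
            if_true, one_ne_zero, if_false, eq_self_iff_true, reduceIte]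
        · simp [hHdef]
        · simp only [mul_ite, mul_zero]
          rw [hBdef, ← Finset.sum_filter, ← Finset.sum_mul]
        · simp only [ite_mul, mul_one, zero_mul]
          rw [hAdef, ← Finset.sum_filter]
        · refine Finset.sum_eq_zero fun k _ => ?_
          split_ifs <;> first | omega | ring1
      have h2 : H • (1 : Matrix (Fin 2) (Fin 2) ℝ) - !![H, B * (t - 1); A, 0]
          = !![0, -(B * (t - 1)); -A, H] := by
        ext i k
        fin_cases i <;> fin_cases k <;> simp [Matrix.one_apply] <;> ring
      rw [fn, hM, det_aux H hH0, hVU, h2, Matrix.det_fin_two_of, hpow]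
      ring
    have heq : (fun t : ℝ => fn n h lam (fun _ => 0)
        (Function.update (fun _ : Fin (n - 1) => (1 : ℝ)) j t))
        = fun t : ℝ => H ^ (n - 2) * (A * B) * (1 - t) := funext key
    rw [heq]
    have h1 : HasDerivAt (fun t : ℝ => (1 : ℝ) - t) (-1) 1 := by
      simpa using (hasDerivAt_id (1 : ℝ)).const_sub 1
    have h2 := h1.const_mul (H ^ (n - 2) * (A * B))
    exact h2.congr_deriv (by ring)

end MLSW13
end

section
/- Let w ∈ ℝ^{3n} be a state vector and ρ₁,…,ρₙ > 0. Suppose for some i ∈ {1,…,n−1} that ρᵢ = ρᵢ₊₁ (i.e. γᵢ = 1) and uᵢ = uᵢ₊₁. Then, denoting by e₁,…,e_{3n} the standard basis of ℝ^{3n}: the vector eᵢ − eᵢ₊₁ is a right eigenvector of A_x(w,γ) with eigenvalue uᵢ, i.e. A_x(w,γ)(eᵢ − eᵢ₊₁) = uᵢ(eᵢ − eᵢ₊₁); and the row vector e_{n+i}ᵀ − e_{n+i+1}ᵀ is a left eigenvector with the same eigenvalue, i.e. (e_{n+i}ᵀ − e_{n+i+1}ᵀ)·A_x(w,γ) = uᵢ·(e_{n+i}ᵀ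 − e_{n+i+1}ᵀ). -/
open Matrix

namespace MLSW14

noncomputable def alpha (n : ℕ) (ρ : Fin n → ℝ) (i k : Fin n) : ℝ :=
  if k < i then ρ k / ρ i else 1

noncomputable def Gam (n : ℕ) (ρ : Fin n → ℝ) : Matrix (Fin n) (Fin n) ℝ :=
  Matrix.of (alpha n ρ)

/-- A 3×3 block matrix with n×n blocks, rows `[[A,B,C],[D,E,F],[G,H,K]]`. -/
def blk3 {n : ℕ} (A B C D E F G H K : Matrix (Fin n) (Fin n) ℝ) :
    Matrix (Fin n ⊕ Fin n ⊕ Fin n) (Fin n ⊕ Fin n ⊕ Fin n) ℝ :=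
  Matrix.fromBlocks A (Matrix.fromCols B C) (Matrix.fromRows D G)
    (Matrix.fromBlocks E F H K)

/-- The matrix `A_x(w,γ)` of the multi-layer shallow water model. -/
noncomputable def Ax (n : ℕ) (ρ : Fin n → ℝ) (h u : Fin n → ℝ) :
    Matrix (Fin n ⊕ Fin n ⊕ Fin n) (Fin n ⊕ Fin n ⊕ Fin n) ℝ :=
  blk3 (Matrix.diagonal u) (Matrix.diagonal h) 0
    (Gam n ρ) (Matrix.diagonal u) 0
    0 0 (Matrix.diagonal u)

/-- The vector `eᵢ − eᵢ₊₁` (within one `Fin n` block). -/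
noncomputable def evec (n : ℕ) (i : Fin n) (hi : i.val + 1 < n) : Fin n → ℝ :=
  fun j => if j = i then 1 else if j = (⟨i.val + 1, hi⟩ : Fin n) then -1 else 0

/-- In the merger case `ρᵢ = ρᵢ₊₁`, `uᵢ = uᵢ₊₁`: `eᵢ − eᵢ₊₁` is a right eigenvector of
`A_x(w,γ)` with eigenvalue `uᵢ`, and `e_{n+i}ᵀ − e_{n+i+1}ᵀ` is a left eigenvector with
the same eigenvalue. -/
theorem stmt14 (n : ℕ) (hn : 2 ≤ n) (ρ : Fin n → ℝ) (hρ : ∀ i, 0 < ρ i)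
    (h u v : Fin n → ℝ) (i : Fin n) (hi : i.val + 1 < n)
    (hρeq : ρ i = ρ ⟨i.val + 1, hi⟩) (hueq : u i = u ⟨i.val + 1, hi⟩) :
    (Ax n ρ h u).mulVec (Sum.elim (evec n i hi) (0 : Fin n ⊕ Fin n → ℝ)) =
      u i • Sum.elim (evec n i hi) (0 : Fin n ⊕ Fin n → ℝ) ∧
    Matrix.vecMul
        (Sum.elim (0 : Fin n → ℝ) (Sum.elim (evec n i hi) (0 : Fin n → ℝ)))
        (Ax n ρ h u) =
      u i • Sum.elim (0 : Fin n → ℝ) (Sum.elim (evec n i hi) (0 : Fin n → ℝ)) := by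
  set i1 : Fin n := ⟨i.val + 1, hi⟩ with hi1
  have hii1 : i ≠ i1 := by
    intro hcontra
    have : i.val = i.val + 1 := congrArg Fin.val hcontra
    omega
  have hlt : i < i1 := by
    rw [Fin.lt_def]; exact Nat.lt_succ_self _
  have hρi1 : ρ i1 ≠ 0 := (hρ i1).ne'
  -- alpha equalities
  have halpha_row : ∀ k, alpha n ρ i k = alpha n ρ i1 k := by
    intro k
    unfold alpha
    rcases lt_trichotomy k i with hk | hk | hk
    · rw [if_pos hk, if_pos (hk.trans hlt), hρeq]
    · subst hk
      rw [if_neg (lt_irrefl _), if_pos hlt, hρeq, div_self hρi1]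
    · have h1 : ¬ k < i := not_lt_of_gt hk
      have h2 : ¬ k < i1 := by
        rw [Fin.lt_def] at hk ⊢
        simp only [hi1]
        omega
      rw [if_neg h1, if_neg h2]
  have halpha_col : ∀ j, alpha n ρ j i = alpha n ρ j i1 := by
    intro j
    unfold alpha
    rcases lt_trichotomy i1 j with hk | hk | hk
    · rw [if_pos (hlt.trans hk), if_pos hk, hρeq]
    · subst hk
      rw [if_pos hlt, if_neg (lt_irrefl _), hρeq, div_self hρi1]
    · have h1 : ¬ i1 < j := not_lt_of_gt hk
      have h2 : ¬ i < j := by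
        rw [Fin.lt_def] at hk ⊢
        simp only [hi1] at hk
        omega
      rw [if_neg h1, if_neg h2]
  -- rewrite the two vectors as differences of Pi.single
  have hx : Sum.elim (evec n i hi) (0 : Fin n ⊕ Fin n → ℝ) =
      Pi.single (Sum.inl i : Fin n ⊕ Fin n ⊕ Fin n) 1 - Pi.single (Sum.inl i1) 1 := by
    funext r
    rcases r with j | j
    · simp only [Sum.elim_inl, evec, Pi.sub_apply, Pi.single_apply, Sum.inl.injEq]
      by_cases h1 : j = i
      · subst h1; simp [hii1]
      · by_cases h2 : j = i1 <;> simp [h1, h2, hii1.symm, ← hi1]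
    · simp [Pi.single_apply]
  have hy : Sum.elim (0 : Fin n → ℝ) (Sum.elim (evec n i hi) (0 : Fin n → ℝ)) =
      Pi.single (Sum.inr (Sum.inl i) : Fin n ⊕ Fin n ⊕ Fin n) 1
        - Pi.single (Sum.inr (Sum.inl i1)) 1 := by
    funext r
    rcases r with j | j
    · simp [Pi.single_apply]
    · rcases j with j | j
      · simp only [Sum.elim_inr, Sum.elim_inl, evec, Pi.sub_apply, Pi.single_apply,
          Sum.inr.injEq, Sum.inl.injEq]
        by_cases h1 : j = i
        · subst h1; simp [hii1]
        · by_cases h2 : j = i1 <;> simp [h1, h2, hii1.symm, ← hi1]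
      · simp [Pi.single_apply]
  constructor
  · rw [hx, Matrix.mulVec_sub, Matrix.mulVec_single, Matrix.mulVec_single]
    funext r
    rcases r with j | j | j
    · simp only [Pi.sub_apply, Pi.smul_apply, Pi.single_apply, smul_eq_mul, Sum.inl.injEq,
        Ax, blk3, Matrix.fromBlocks_apply₁₁, Matrix.diagonal_apply]
      by_cases h1 : j = i
      · subst h1; simp [hii1, hii1.symm]
      · by_cases h2 : j = i1
        · subst h2; simp [h1, Ne.symm h1, hii1.symm, ← hueq]
        · simp [h1, h2, Ne.symm h1, Ne.symm h2]
    · simp only [Pi.sub_apply, Pi.smul_apply, Pi.single_apply, smul_eq_mul,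
        Ax, blk3, Matrix.fromBlocks_apply₂₁, Matrix.fromRows_apply_inl, Gam, Matrix.of_apply,
        Matrix.col_apply, MulOpposite.op_one, one_smul]
      rw [halpha_col j]
      simp
    · simp only [Pi.sub_apply, Pi.smul_apply, Pi.single_apply, smul_eq_mul,
        Ax, blk3, Matrix.fromBlocks_apply₂₁, Matrix.fromRows_apply_inr, Matrix.zero_apply]
      simp
  · rw [hy, Matrix.sub_vecMul, Matrix.single_vecMul, Matrix.single_vecMul]
    funext r
    rcases r with j | j | j
    · simp only [Pi.sub_apply, Pi.smul_apply, Pi.single_apply, smul_eq_mul,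
        Ax, blk3, Matrix.fromBlocks_apply₂₁, Matrix.fromRows_apply_inl, Gam, Matrix.of_apply,
        Matrix.row_apply, one_mul]
      rw [halpha_row j]
      simp
    · simp only [Pi.sub_apply, Pi.smul_apply, Pi.single_apply, smul_eq_mul, Sum.inr.injEq,
        Sum.inl.injEq, Ax, blk3, Matrix.fromBlocks_apply₂₂, Matrix.fromBlocks_apply₁₁,
        Matrix.diagonal_apply]
      by_cases h1 : j = i
      · subst h1; simp [hii1, hii1.symm]
      · by_cases h2 : j = i1
        · subst h2; simp [h1, Ne.symm h1, hii1.symm, ← hueq]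
        · simp [h1, h2, Ne.symm h1, Ne.symm h2]
    · simp only [Pi.sub_apply, Pi.smul_apply, Pi.single_apply, smul_eq_mul,
        Ax, blk3, Matrix.fromBlocks_apply₂₂, Matrix.fromBlocks_apply₁₂, Matrix.zero_apply]
      simp
end MLSW14
end

section
/- For every augmented state vector v ∈ ℝ^{4n}, densities ρ₁,…,ρₙ > 0, Coriolis parameter f ∈ ℝ and λ ∈ ℝ (or ℂ), the characteristic polynomial of the augmented matrix factors as det(A^a_x(v,γ) − λ·I_{4n}) = (−λ)ⁿ · det(A_x(w,γ) − λ·I_{3n}), where w ∈ ℝ^{3n} consists of the first 3n coordinates of v. -/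
open Matrix

namespace MLSW16

noncomputable def alpha (n : ℕ) (ρ : Fin n → ℝ) (i k : Fin n) : ℝ :=
  if k < i then ρ k / ρ i else 1

noncomputable def Gam (n : ℕ) (ρ : Fin n → ℝ) : Matrix (Fin n) (Fin n) ℝ :=
  Matrix.of (alpha n ρ)

/-- A 3×3 block matrix with n×n blocks, rows `[[A,B,C],[D,E,F],[G,H,K]]`. -/
def blk3 {n : ℕ} (A B C D E F G H K : Matrix (Fin n) (Fin n) ℝ) :
    Matrix (Fin n ⊕ Fin n ⊕ Fin n) (Fin n ⊕ Fin n ⊕ Fin n) ℝ :=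
  Matrix.fromBlocks A (Matrix.fromCols B C) (Matrix.fromRows D G)
    (Matrix.fromBlocks E F H K)

/-- The 3n×3n matrix `A_x(w,γ)` of the multi-layer shallow water model. -/
noncomputable def Ax (n : ℕ) (ρ : Fin n → ℝ) (h u : Fin n → ℝ) :
    Matrix (Fin n ⊕ Fin n ⊕ Fin n) (Fin n ⊕ Fin n ⊕ Fin n) ℝ :=
  blk3 (Matrix.diagonal u) (Matrix.diagonal h) 0
    (Gam n ρ) (Matrix.diagonal u) 0
    0 0 (Matrix.diagonal u)

/-- The 4n×4n augmented matrix `A^a_x(v,γ)`, with block rows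
`[[V_x, H, 0, 0],[Γ, V_x, V_y, 0],[0,0,0,0],[0, W, 0, V_x]]`. -/
noncomputable def Aax (n : ℕ) (ρ : Fin n → ℝ) (h u v w : Fin n → ℝ) (f : ℝ) :
    Matrix (Fin n ⊕ (Fin n ⊕ Fin n ⊕ Fin n)) (Fin n ⊕ (Fin n ⊕ Fin n ⊕ Fin n)) ℝ :=
  Matrix.fromBlocks (Matrix.diagonal u)
    (Matrix.fromCols (Matrix.diagonal h) (Matrix.fromCols 0 0))
    (Matrix.fromRows (Gam n ρ) (Matrix.fromRows 0 0))
    (blk3 (Matrix.diagonal u) (Matrix.diagonal v) 0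
      0 0 0
      (Matrix.diagonal fun i => w i + f) 0 (Matrix.diagonal u))

/-- Equiv moving the `v`-block (third of the four blocks) to the end. -/
def e1 (n : ℕ) : (Fin n ⊕ (Fin n ⊕ Fin n ⊕ Fin n)) ≃ ((Fin n ⊕ (Fin n ⊕ Fin n)) ⊕ Fin n) where
  toFun x := match x with
    | .inl a => .inl (.inl a)
    | .inr (.inl b) => .inl (.inr (.inl b))
    | .inr (.inr (.inl c)) => .inr c
    | .inr (.inr (.inr d)) => .inl (.inr (.inr d))
  invFun x := match x with
    | .inl (.inl a) => .inl a
    | .inl (.inr (.inl b)) => .inr (.inl b)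
    | .inl (.inr (.inr d)) => .inr (.inr (.inr d))
    | .inr c => .inr (.inr (.inl c))
  left_inv := by rintro (a | b | c | d) <;> rfl
  right_inv := by rintro ((a | b | d) | c) <;> rfl

/-- Associativity equiv for the 3n index. -/
def e2 (n : ℕ) : (Fin n ⊕ (Fin n ⊕ Fin n)) ≃ ((Fin n ⊕ Fin n) ⊕ Fin n) where
  toFun x := match x with
    | .inl a => .inl (.inl a)
    | .inr (.inl b) => .inl (.inr b)
    | .inr (.inr c) => .inr c
  invFun x := match x with
    | .inl (.inl a) => .inl a
    | .inl (.inr b) => .inr (.inl b)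
    | .inr c => .inr (.inr c)
  left_inv := by rintro (a | b | c) <;> rfl
  right_inv := by rintro ((a | b) | c) <;> rfl

/-- Characteristic polynomial of the augmented matrix:
`det(A^a_x − λI_{4n}) = (−λ)ⁿ det(A_x − λI_{3n})`. -/
theorem stmt16 (n : ℕ) (hn : 2 ≤ n) (ρ : Fin n → ℝ) (hρ : ∀ i, 0 < ρ i)
    (h u v w : Fin n → ℝ) (f lam : ℝ) :
    (Aax n ρ h u v w f - lam • 1).det =
      (-lam) ^ n * (Ax n ρ h u - lam • 1).det := by
  classical
  set Dx := Matrix.diagonal (fun i => u i - lam) with hDxdef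
  set W' := Matrix.diagonal (fun i => w i + f) with hW'def
  set P := Matrix.fromBlocks Dx (Matrix.diagonal h) (Gam n ρ) Dx with hPdef
  set M : Matrix (Fin n ⊕ (Fin n ⊕ Fin n)) (Fin n ⊕ (Fin n ⊕ Fin n)) ℝ :=
    Matrix.fromBlocks Dx (Matrix.fromCols (Matrix.diagonal h) 0)
      (Matrix.fromRows (Gam n ρ) 0) (Matrix.fromBlocks Dx 0 W' Dx) with hMdef
  set B : Matrix (Fin n ⊕ (Fin n ⊕ Fin n)) (Fin n) ℝ :=
    Matrix.fromRows 0 (Matrix.fromRows (Matrix.diagonal v) 0) with hBdef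
  have h1 : (Matrix.reindex (e1 n) (e1 n)) (Aax n ρ h u v w f - lam • 1) =
      Matrix.fromBlocks M B 0 (Matrix.diagonal fun _ => -lam) := by
    ext i j
    rcases i with ((a | b | d) | c) <;> rcases j with ((a' | b' | d') | c') <;>
      · simp [e1, Aax, blk3, hMdef, hBdef, hDxdef, hW'def, Matrix.one_apply,
          Matrix.diagonal_apply, Matrix.fromBlocks, Matrix.fromRows_apply_inl, Matrix.fromRows_apply_inr, Matrix.fromCols_apply_inl, Matrix.fromCols_apply_inr,
          Matrix.sub_apply, Matrix.smul_apply, Gam, alpha]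
        try (split_ifs <;> ring)
  have hdet1 : (Aax n ρ h u v w f - lam • 1).det = M.det * (-lam) ^ n := by
    rw [← Matrix.det_reindex_self (e1 n) (Aax n ρ h u v w f - lam • 1), h1,
      Matrix.det_fromBlocks_zero₂₁, Matrix.det_diagonal]
    simp
  have h2 : (Matrix.reindex (e2 n) (e2 n)) M =
      Matrix.fromBlocks P 0 (Matrix.fromCols 0 W') Dx := by
    ext i j
    rcases i with ((a | b) | c) <;> rcases j with ((a' | b') | c') <;>
      simp [e2, hMdef, hPdef, Matrix.fromBlocks, Matrix.fromRows_apply_inl, Matrix.fromRows_apply_inr, Matrix.fromCols_apply_inl, Matrix.fromCols_apply_inr]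
  have hdetM : M.det = P.det * Dx.det := by
    rw [← Matrix.det_reindex_self (e2 n) M, h2, Matrix.det_fromBlocks_zero₁₂]
  have h3 : (Matrix.reindex (e2 n) (e2 n)) (Ax n ρ h u - lam • 1) =
      Matrix.fromBlocks P 0 0 Dx := by
    ext i j
    rcases i with ((a | b) | c) <;> rcases j with ((a' | b') | c') <;>
      · simp [e2, Ax, blk3, hPdef, hDxdef, Matrix.one_apply, Matrix.diagonal_apply,
          Matrix.fromBlocks, Matrix.fromRows_apply_inl, Matrix.fromRows_apply_inr, Matrix.fromCols_apply_inl, Matrix.fromCols_apply_inr,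
          Matrix.sub_apply, Matrix.smul_apply, Gam, alpha]
        try (split_ifs <;> ring)
  have hdet3 : (Ax n ρ h u - lam • 1).det = P.det * Dx.det := by
    rw [← Matrix.det_reindex_self (e2 n) (Ax n ρ h u - lam • 1), h3,
      Matrix.det_fromBlocks_zero₁₂]
  rw [hdet1, hdetM, hdet3]
  ring

end MLSW16
end

section
/- For every augmented state vector v ∈ ℝ^{4n}, densities ρ₁,…,ρₙ > 0 and Coriolis parameter f ∈ ℝ, the 4n×4n matrix S^a(v,γ) is symmetric, and both products S^a(v,γ)·A^a_x(v,γ) and S^a(v,γ)·A^a_y(v,γ) are symmetric matrices. -/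
open Matrix

namespace MLSW17

noncomputable def alpha (n : ℕ) (ρ : Fin n → ℝ) (i k : Fin n) : ℝ :=
  if k < i then ρ k / ρ i else 1

noncomputable def Gam (n : ℕ) (ρ : Fin n → ℝ) : Matrix (Fin n) (Fin n) ℝ :=
  Matrix.of (alpha n ρ)

/-- `α_{n,i}`. -/
noncomputable def alphaN (n : ℕ) (ρ : Fin n → ℝ) (i : Fin n) : ℝ :=
  if h : n - 1 < n then alpha n ρ ⟨n - 1, h⟩ i else 1

noncomputable def Delta (n : ℕ) (ρ : Fin n → ℝ) : Matrix (Fin n) (Fin n) ℝ :=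
  Matrix.diagonal (alphaN n ρ)

/-- A 3×3 block matrix with n×n blocks, rows `[[A,B,C],[D,E,F],[G,H,K]]`. -/
def blk3 {n : ℕ} (A B C D E F G H K : Matrix (Fin n) (Fin n) ℝ) :
    Matrix (Fin n ⊕ Fin n ⊕ Fin n) (Fin n ⊕ Fin n ⊕ Fin n) ℝ :=
  Matrix.fromBlocks A (Matrix.fromCols B C) (Matrix.fromRows D G)
    (Matrix.fromBlocks E F H K)

/-- `W = diag(wᵢ + f)`. -/
noncomputable def Wm (n : ℕ) (w : Fin n → ℝ) (f : ℝ) : Matrix (Fin n) (Fin n) ℝ :=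
  Matrix.diagonal fun i => w i + f

/-- The 4n×4n augmented matrix `A^a_x(v,γ)`. -/
noncomputable def Aax (n : ℕ) (ρ : Fin n → ℝ) (h u v w : Fin n → ℝ) (f : ℝ) :
    Matrix (Fin n ⊕ (Fin n ⊕ Fin n ⊕ Fin n)) (Fin n ⊕ (Fin n ⊕ Fin n ⊕ Fin n)) ℝ :=
  Matrix.fromBlocks (Matrix.diagonal u)
    (Matrix.fromCols (Matrix.diagonal h) (Matrix.fromCols 0 0))
    (Matrix.fromRows (Gam n ρ) (Matrix.fromRows 0 0))
    (blk3 (Matrix.diagonal u) (Matrix.diagonal v) 0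
      0 0 0
      (Wm n w f) 0 (Matrix.diagonal u))

/-- The 4n×4n augmented matrix `A^a_y(v,γ)`, with block rows
`[[V_y, 0, H, 0],[0,0,0,0],[Γ, V_x, V_y, 0],[0, 0, W, V_y]]`. -/
noncomputable def Aay (n : ℕ) (ρ : Fin n → ℝ) (h u v w : Fin n → ℝ) (f : ℝ) :
    Matrix (Fin n ⊕ (Fin n ⊕ Fin n ⊕ Fin n)) (Fin n ⊕ (Fin n ⊕ Fin n ⊕ Fin n)) ℝ :=
  Matrix.fromBlocks (Matrix.diagonal v)
    (Matrix.fromCols 0 (Matrix.fromCols (Matrix.diagonal h) 0))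
    (Matrix.fromRows 0 (Matrix.fromRows (Gam n ρ) 0))
    (blk3 0 0 0
      (Matrix.diagonal u) (Matrix.diagonal v) 0
      0 (Wm n w f) (Matrix.diagonal v))

/-- The 4n×4n symmetrizer `S^a(v,γ)`, with block rows
`[[ΔΓ + W², ΔV_x, ΔV_y, −WH],[ΔV_x, ΔH, 0, 0],[ΔV_y, 0, ΔH, 0],[−WH, 0, 0, H²]]`. -/
noncomputable def Sa (n : ℕ) (ρ : Fin n → ℝ) (h u v w : Fin n → ℝ) (f : ℝ) :
    Matrix (Fin n ⊕ (Fin n ⊕ Fin n ⊕ Fin n)) (Fin n ⊕ (Fin n ⊕ Fin n ⊕ Fin n)) ℝ :=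
  Matrix.fromBlocks (Delta n ρ * Gam n ρ + Wm n w f ^ 2)
    (Matrix.fromCols (Delta n ρ * Matrix.diagonal u)
      (Matrix.fromCols (Delta n ρ * Matrix.diagonal v)
        (-(Wm n w f * Matrix.diagonal h))))
    (Matrix.fromRows (Delta n ρ * Matrix.diagonal u)
      (Matrix.fromRows (Delta n ρ * Matrix.diagonal v)
        (-(Wm n w f * Matrix.diagonal h))))
    (blk3 (Delta n ρ * Matrix.diagonal h) 0 0
      0 (Delta n ρ * Matrix.diagonal h) 0
      0 0 (Matrix.diagonal h ^ 2))


private lemma key (n : ℕ) (ρ : Fin n → ℝ) (hρ : ∀ i, 0 < ρ i) (i j : Fin n) :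
    alphaN n ρ i * alpha n ρ i j = alphaN n ρ j * alpha n ρ j i := by
  have hn1 : n - 1 < n := Nat.sub_lt (Nat.pos_of_ne_zero (by rintro rfl; exact i.elim0)) one_pos
  set L : Fin n := ⟨n - 1, hn1⟩ with hL
  have hle : ∀ k : Fin n, ¬ k < L → k = L := by
    intro k hk
    have : (k : ℕ) < n := k.isLt
    exact Fin.ext (by simp [Fin.lt_def, hL] at hk ⊢; omega)
  have main : ∀ a b : Fin n, b < a → alphaN n ρ a * alpha n ρ a b = alphaN n ρ b := by
    intro a b hba
    simp only [alphaN, dif_pos hn1, alpha, if_pos hba, ← hL]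
    by_cases ha : a < L
    · rw [if_pos ha, if_pos (hba.trans ha)]
      have h1 := (hρ a).ne'
      have h2 := (hρ L).ne'
      field_simp
    · have : a = L := hle a ha
      subst this
      rw [if_neg ha, if_pos hba]
      ring
  rcases lt_trichotomy i j with hij | rfl | hji
  · rw [main j i hij, alpha, if_neg (asymm hij), mul_one]
  · rfl
  · rw [main i j hji, alpha, if_neg (asymm hji), mul_one]

private lemma fromCols_add' {m n₁ n₂ : Type*} (A C : Matrix m n₁ ℝ) (B D : Matrix m n₂ ℝ) :
    Matrix.fromCols A B + Matrix.fromCols C D = Matrix.fromCols (A + C) (B + D) := by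
  ext i j; cases j <;> simp [Matrix.fromCols_apply_inl, Matrix.fromCols_apply_inr]

private lemma fromRows_add' {m₁ m₂ n : Type*} (A C : Matrix m₁ n ℝ) (B D : Matrix m₂ n ℝ) :
    Matrix.fromRows A B + Matrix.fromRows C D = Matrix.fromRows (A + C) (B + D) := by
  ext i j; cases i <;> simp [Matrix.fromRows_apply_inl, Matrix.fromRows_apply_inr]

/-- `S^a(v,γ)` is symmetric and `S^a·A^a_x`, `S^a·A^a_y` are symmetric. -/
theorem stmt17 (n : ℕ) (hn : 2 ≤ n) (ρ : Fin n → ℝ) (hρ : ∀ i, 0 < ρ i)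
    (h u v w : Fin n → ℝ) (f : ℝ) :
    (Sa n ρ h u v w f).IsSymm ∧
    (Sa n ρ h u v w f * Aax n ρ h u v w f).IsSymm ∧
    (Sa n ρ h u v w f * Aay n ρ h u v w f).IsSymm := by
  refine ⟨?_, ?_, ?_⟩ <;>
  · rw [Matrix.IsSymm]
    simp only [Sa, Aax, Aay, blk3, Delta, Wm]
    simp only [fromBlocks_multiply, fromCols_mul_fromRows, fromRows_mul, mul_fromCols,
      fromCols_mul_fromBlocks, fromBlocks_mul_fromRows, fromBlocks_transpose,
      transpose_fromCols, transpose_fromRows, transpose_add,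
      transpose_mul, transpose_neg, transpose_pow, diagonal_transpose, transpose_zero,
      diagonal_mul_diagonal, Matrix.mul_zero, Matrix.zero_mul,
      Matrix.neg_mul, Matrix.mul_neg, neg_neg, neg_zero, add_zero, zero_add,
      fromCols_add', fromRows_add', fromBlocks_add,
      fromCols_fromRows_eq_fromBlocks, fromRows_fromCols_eq_fromBlocks]
    ext i j
    rcases i with i | i | i | i <;> rcases j with j | j | j | j <;>
      simp only [fromBlocks_apply₁₁, fromBlocks_apply₁₂, fromBlocks_apply₂₁, fromBlocks_apply₂₂,
        fromRows_apply_inl, fromRows_apply_inr, fromCols_apply_inl, fromCols_apply_inr,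
        Matrix.add_apply, Matrix.neg_apply, Matrix.zero_apply, Matrix.diagonal_mul,
        Matrix.mul_diagonal, pow_two, Matrix.diagonal_mul_diagonal, Matrix.transpose_apply,
        Matrix.diagonal_apply, Matrix.of_apply]
    all_goals try split_ifs with hij
    all_goals try subst hij
    all_goals try simp only [Gam, Matrix.of_apply]
    all_goals try ring1
    all_goals try linear_combination key n ρ hρ j i
    all_goals try linear_combination (u i + u j) * key n ρ hρ j i
    all_goals try linear_combination (v i + v j) * key n ρ hρ j i
    all_goals try linear_combination h j * key n ρ hρ j i
    all_goals try linear_combination h i * key n ρ hρ j i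


end MLSW17
end
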